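/- Let n be odd with k distinct prime divisors, and let P be a set of permutations of ZMod n such that the sum of any two distinct elements of P is not a permutation. Then |P| ≤ 2^k · (n-1)! / φ(n). -/

import Mathlib

-- Lemma A: units with pairwise non-unit sums
theorem lemA (n : ℕ) (hn : Odd n) [NeZero n] (S : Finset (ZMod n))
    (hu : ∀ a ∈ S, IsUnit a)
    (hs : ∀ a ∈ S, ∀ b ∈ S, a ≠ b → ¬ IsUnit (a + b)) :
    S.card ≤ 2 ^ n.primeFactors.card := by
  classical
  set F : ZMod n → (n.primeFactors → Bool) := fun x p =>
    decide (2 * ((ZMod.castHom (Nat.dvd_of_mem_primeFactors p.2) (ZMod p.1)) x).val < p.1) with hF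
  have hinj : Set.InjOn F S := by
    intro x hx y hy hxy
    by_contra hne
    have hnu : ¬ IsUnit (x + y) := hs x hx y hy hne
    -- find prime p | n with p | (x+y).val
    have h1 : ¬ Nat.Coprime (x + y).val n := by
      intro hc
      apply hnu
      have := (ZMod.isUnit_iff_coprime (x+y).val n).2 hc
      rwa [ZMod.natCast_val, ZMod.cast_id] at this
    obtain ⟨p, hp, hpd⟩ := Nat.exists_prime_and_dvd (fun e => h1 e)
    have hpn : p ∣ n := hpd.trans (Nat.gcd_dvd_right _ _)
    have hpv : p ∣ (x + y).val := hpd.trans (Nat.gcd_dvd_left _ _)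
    have hpmem : p ∈ n.primeFactors := Nat.mem_primeFactors.2 ⟨hp, hpn, NeZero.ne n⟩
    haveI : Fact p.Prime := ⟨hp⟩
    set f := ZMod.castHom (Nat.dvd_of_mem_primeFactors hpmem) (ZMod p)
    have hxy0 : f (x + y) = 0 := by
      have : f (x + y) = (((x+y).val : ℕ) : ZMod p) := by
        rw [ZMod.castHom_apply, ← ZMod.natCast_val]
      rw [this, ZMod.natCast_eq_zero_iff]
      exact hpv
    have hfy : f y = - f x := by
      have := hxy0; rw [map_add] at this; linear_combination this
    have hfx0 : f x ≠ 0 := ((hu x hx).map f).ne_zero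
    have hpodd : Odd p := hp.odd_of_ne_two (by rintro rfl; obtain ⟨c, rfl⟩ := hpn; rw [Nat.odd_iff] at hn; omega)
    -- colors differ at p
    have this : decide (2 * (f x).val < p) = decide (2 * (f y).val < p) :=
      congrFun hxy ⟨p, hpmem⟩
    have hval : (f y).val = p - (f x).val := by
      rw [hfy, ZMod.neg_val, if_neg hfx0]
    have h2 : (f x).val < p := (f x).val_lt
    have h3 : (f x).val ≠ 0 := fun e => hfx0 ((ZMod.val_eq_zero _).1 e)
    obtain ⟨m, hm⟩ := hpodd
    rw [hval] at this
    revert this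
    simp only [decide_eq_decide]
    omega
  calc S.card ≤ (Finset.univ : Finset (n.primeFactors → Bool)).card :=
        Finset.card_le_card_of_injOn F (fun a _ => Finset.mem_univ _) hinj
    _ = 2 ^ n.primeFactors.card := by
        simp [Finset.card_univ, Fintype.card_coe]

def affE {n : ℕ} (s : (ZMod n)ˣ) (t : ZMod n) : Equiv.Perm (ZMod n) where
  toFun x := (s : ZMod n) * x + t
  invFun x := ((s⁻¹ : (ZMod n)ˣ) : ZMod n) * (x - t)
  left_inv x := by simp
  right_inv x := by simp

theorem bijaff {n : ℕ} (w : (ZMod n)ˣ) (c : ZMod n) (ρ : Equiv.Perm (ZMod n)) :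
    Function.Bijective (fun x => (w : ZMod n) * ρ x + c) :=
  (ρ.trans (affE w c)).bijective

theorem sol {n : ℕ} (s : (ZMod n)ˣ) (t : ZMod n) (σ ρ : Equiv.Perm (ZMod n))
    (hee : ∀ x, (s : ZMod n) * σ x + t = ρ x) :
    ∀ x, σ x = ((s⁻¹ : (ZMod n)ˣ) : ZMod n) * ρ x - ((s⁻¹ : (ZMod n)ˣ) : ZMod n) * t := by
  intro x
  have h1 : (s : ZMod n) * σ x = ρ x - t := by linear_combination (hee x)
  calc σ x = ((s⁻¹ : (ZMod n)ˣ) : ZMod n) * ((s : ZMod n) * σ x) := by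
        rw [Units.inv_mul_cancel_left]
    _ = ((s⁻¹ : (ZMod n)ˣ) : ZMod n) * (ρ x - t) := by rw [h1]
    _ = _ := by ring

theorem stmt15 (n : ℕ) (hn : Odd n) (P : Finset (Equiv.Perm (ZMod n)))
    (h : ∀ σ ∈ P, ∀ τ ∈ P, σ ≠ τ → ¬ Function.Bijective (fun i => σ i + τ i)) :
    P.card ≤ 2 ^ n.primeFactors.card * (n - 1).factorial / n.totient := by
  classical
  haveI : NeZero n := ⟨hn.pos.ne'⟩
  set k := n.primeFactors.card with hk
  have h2u : IsUnit (2 : ZMod n) := by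
    have h2 : ((2 : ℕ) : ZMod n) = (2 : ZMod n) := by norm_cast
    rw [← h2, ZMod.isUnit_iff_coprime]
    refine (Nat.prime_two.coprime_iff_not_dvd).2 fun hd => ?_
    obtain ⟨c, rfl⟩ := hd
    rw [Nat.odd_iff] at hn; omega
  set D : Finset (((ZMod n)ˣ × ZMod n) × Equiv.Perm (ZMod n)) := Finset.univ ×ˢ P with hD
  set f : ((ZMod n)ˣ × ZMod n) × Equiv.Perm (ZMod n) → Equiv.Perm (ZMod n) :=
    fun d => d.2.trans (affE d.1.1 d.1.2) with hf
  have hfapp : ∀ d x, f d x = (d.1.1 : ZMod n) * d.2 x + d.1.2 := fun d x => rfl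
  have hfib : ∀ ρ ∈ D.image f, (D.filter (fun d => f d = ρ)).card ≤ 2 ^ k := by
    intro ρ _
    set Fρ := D.filter (fun d => f d = ρ) with hFρ
    have hmem : ∀ d ∈ Fρ, d.2 ∈ P ∧ ∀ x, (d.1.1 : ZMod n) * d.2 x + d.1.2 = ρ x := by
      intro d hd
      rw [hFρ, Finset.mem_filter, hD, Finset.mem_product] at hd
      refine ⟨hd.1.2, fun x => ?_⟩
      rw [← hfapp, hd.2]
    set g : ((ZMod n)ˣ × ZMod n) × Equiv.Perm (ZMod n) → ZMod n :=
      fun d => ((d.1.1⁻¹ : (ZMod n)ˣ) : ZMod n) with hg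
    -- distinct s values give distinct perms in P with nonbijective sums
    have hdist : ∀ d1 ∈ Fρ, ∀ d2 ∈ Fρ, d1.1.1 ≠ d2.1.1 → d1.2 ≠ d2.2 := by
      intro d1 h1 d2 h2 hs hσ
      obtain ⟨hp1, he1⟩ := hmem d1 h1
      obtain ⟨hp2, he2⟩ := hmem d2 h2
      have e0 := (he1 (d1.2.symm 0)).trans (he2 (d1.2.symm 0)).symm
      have e1 := (he1 (d1.2.symm 1)).trans (he2 (d1.2.symm 1)).symm
      rw [← hσ] at e0 e1
      simp only [Equiv.apply_symm_apply, mul_zero, mul_one, zero_add] at e0 e1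
      exact hs (Units.ext (by linear_combination e1 - e0))
    have hsumbad : ∀ d1 ∈ Fρ, ∀ d2 ∈ Fρ, d1.2 ≠ d2.2 →
        ¬ IsUnit (g d1 + g d2) := by
      intro d1 h1 d2 h2 hne hu
      obtain ⟨hp1, he1⟩ := hmem d1 h1
      obtain ⟨hp2, he2⟩ := hmem d2 h2
      apply h d1.2 hp1 d2.2 hp2 hne
      have heq : (fun i => d1.2 i + d2.2 i) =
          fun i => (hu.unit : ZMod n) * ρ i + (-(g d1 * d1.1.2 + g d2 * d2.1.2)) := by
        funext i
        rw [sol d1.1.1 d1.1.2 d1.2 ρ he1 i, sol d2.1.1 d2.1.2 d2.2 ρ he2 i, hu.unit_spec]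
        show _ = (g d1 + g d2) * ρ i + _
        rw [hg]; ring
      rw [heq]
      exact bijaff hu.unit _ ρ
    have hginj : Set.InjOn g Fρ := by
      intro d1 h1 d2 h2 hgg
      have hs : d1.1.1 = d2.1.1 := by
        have : d1.1.1⁻¹ = d2.1.1⁻¹ := Units.ext hgg
        exact inv_injective this
      obtain ⟨hp1, he1⟩ := hmem d1 h1
      obtain ⟨hp2, he2⟩ := hmem d2 h2
      have ht : d1.1.2 = d2.1.2 := by
        by_contra hne
        have hσ : d1.2 ≠ d2.2 := by
          intro hσ
          apply hne
          have := (he1 (d1.2.symm 0)).trans (he2 (d1.2.symm 0)).symm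
          rw [← hσ] at this
          simp only [Equiv.apply_symm_apply, mul_zero] at this
          simpa using this
        apply hsumbad d1 h1 d2 h2 hσ
        rw [hgg, ← two_mul]
        exact h2u.mul ((d2.1.1⁻¹).isUnit)
      have hσ : d1.2 = d2.2 := by
        apply Equiv.ext
        intro x
        rw [sol d1.1.1 d1.1.2 d1.2 ρ he1 x, sol d2.1.1 d2.1.2 d2.2 ρ he2 x, hs, ht]
      exact Prod.ext (Prod.ext hs ht) hσ
    have hcard : Fρ.card = (Fρ.image g).card := (Finset.card_image_of_injOn hginj).symm
    rw [hcard, hk]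
    apply lemA n hn
    · intro a ha
      obtain ⟨d, _, rfl⟩ := Finset.mem_image.1 ha
      exact (d.1.1⁻¹).isUnit
    · intro a ha b hb hab
      obtain ⟨d1, hd1, rfl⟩ := Finset.mem_image.1 ha
      obtain ⟨d2, hd2, rfl⟩ := Finset.mem_image.1 hb
      have hs : d1.1.1 ≠ d2.1.1 := by
        intro e; exact hab (by rw [hg]; simp [e])
      exact hsumbad d1 hd1 d2 hd2 (hdist d1 hd1 d2 hd2 hs)
  have hDle : D.card ≤ 2 ^ k * (D.image f).card :=
    Finset.card_le_mul_card_image D (2 ^ k) hfib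
  have hDcard : D.card = (n.totient * n) * P.card := by
    rw [hD, Finset.card_product, Finset.card_univ, Fintype.card_prod,
      ZMod.card_units_eq_totient, ZMod.card]
  have himg : (D.image f).card ≤ n.factorial := by
    calc (D.image f).card ≤ Fintype.card (Equiv.Perm (ZMod n)) :=
          Finset.card_le_univ _
      _ = n.factorial := by rw [Fintype.card_perm, ZMod.card]
  have hmain : (n.totient * n) * P.card ≤ 2 ^ k * n.factorial := by
    rw [← hDcard]
    exact hDle.trans (Nat.mul_le_mul_left _ himg)
  rw [← Nat.mul_factorial_pred hn.pos.ne'] at hmain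
  have hmain2 : n.totient * P.card ≤ 2 ^ k * (n - 1).factorial := by
    refine Nat.le_of_mul_le_mul_left ?_ hn.pos
    calc n * (n.totient * P.card) = (n.totient * n) * P.card := by ring
      _ ≤ 2 ^ k * (n * (n - 1).factorial) := hmain
      _ = n * (2 ^ k * (n - 1).factorial) := by ring
  rw [Nat.le_div_iff_mul_le (Nat.totient_pos.2 hn.pos)]
  calc P.card * n.totient = n.totient * P.card := by ring
    _ ≤ 2 ^ k * (n - 1).factorial := hmain2
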